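/- Let H be a finite-dimensional real Hilbert space, P : H → H a self-adjoint positive definite linear map, D : H → 2^H maximally monotone (in the standard inner product), N : H → H a skew-adjoint bounded linear map, and H₀ : H → H an affine map such that Id − κP⁻¹∘H₀ is nonexpansive in the P-inner product ⟨x,y⟩_P := ⟨x, Py⟩ for some κ > 1. Then T := (Id + P⁻¹∘(D + N))⁻¹ ∘ (Id − P⁻¹∘H₀) is single-valued and κ/(2κ−1)-averaged nonexpansive in (H, ⟨·,·⟩_P). -/

import Mathlib

open scoped RealInnerProductSpace


section Minty

variable {E : Type*} [NormedAddCommGroup E] [InnerProductSpace ℝ E]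

lemma continuous_finset_sup'' {ι : Type*} {X : Type*} [TopologicalSpace X]
    (s : Finset ι) (hs : s.Nonempty) (g : ι → X → ℝ) (hg : ∀ i, Continuous (g i)) :
    Continuous fun y => s.sup' hs fun i => g i y := by
  induction hs using Finset.Nonempty.cons_induction with
  | singleton i => simp only [Finset.sup'_singleton]; exact hg i
  | cons i s hi hs ih =>
      have h : (fun y => (Finset.cons i s hi).sup' (Finset.cons_nonempty hi) fun j => g j y)
          = fun y => max (g i y) (s.sup' hs fun j => g j y) := by
        funext y
        rw [Finset.sup'_cons hs]
      rw [h]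
      exact (hg i).max ih

lemma inner_sum_sum {ι : Type*} (t : Finset ι) (c : ι → ℝ) (g : ι → E) :
    ⟪∑ i ∈ t, c i • g i, ∑ j ∈ t, c j • g j⟫ =
      ∑ i ∈ t, ∑ j ∈ t, (c i * c j) * ⟪g i, g j⟫ := by
  rw [sum_inner]
  refine Finset.sum_congr rfl fun i _ => ?_
  rw [real_inner_smul_left, inner_sum, Finset.mul_sum]
  refine Finset.sum_congr rfl fun j _ => ?_
  rw [real_inner_smul_right]; ring

set_option maxHeartbeats 1000000 in
/-- finite Kirszbraun-type ball intersection lemma -/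
lemma finite_kirszbraun [FiniteDimensional ℝ E] {ι : Type*}
    (s : Finset ι) (a q : ι → E) (w : E)
    (hlip : ∀ i ∈ s, ∀ j ∈ s, ‖q i - q j‖ ≤ ‖a i - a j‖) :
    ∃ y : E, ∀ i ∈ s, ‖y - q i‖ ≤ ‖w - a i‖ := by
  classical
  rcases s.eq_empty_or_nonempty with rfl | hs
  · exact ⟨0, by simp⟩
  by_cases h0 : ∃ i ∈ s, w = a i
  · obtain ⟨i0, hi0, hw⟩ := h0
    refine ⟨q i0, fun j hj => ?_⟩
    rw [hw]
    exact hlip i0 hi0 j hj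
  push_neg at h0
  have hr : ∀ i ∈ s, 0 < ‖w - a i‖ := fun i hi => by
    rw [norm_pos_iff, sub_ne_zero]; exact h0 i hi
  set r : ι → ℝ := fun i => ‖w - a i‖ with hrdef
  set f : E → ℝ := fun y => s.sup' hs fun i => ‖y - q i‖ / r i with hfdef
  have hfcont : Continuous f :=
    continuous_finset_sup'' s hs _ (fun i =>
      ((continuous_id.sub continuous_const).norm).div_const _)
  have hfle : ∀ y, ∀ i ∈ s, ‖y - q i‖ / r i ≤ f y := fun y i hi =>
    Finset.le_sup' (f := fun i => ‖y - q i‖ / r i) hi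
  -- existence of a global minimizer
  obtain ⟨i1, hi1⟩ := id hs
  have hr1 := hr i1 hi1
  set c0 : ℝ := f (q i1) with hc0def
  have hc0 : 0 ≤ c0 := le_trans (by simp) (hfle (q i1) i1 hi1)
  set R0 : ℝ := r i1 * (c0 + 1) with hR0def
  have hR0 : 0 ≤ R0 := by positivity
  have hkey : ∀ y, y ∉ Metric.closedBall (q i1) R0 → c0 < f y := by
    intro y hy
    rw [Metric.mem_closedBall, not_le, dist_eq_norm] at hy
    have h1 := hfle y i1 hi1
    have h2 : R0 / r i1 < ‖y - q i1‖ / r i1 := by gcongr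
    have h3 : R0 / r i1 = c0 + 1 := by
      rw [hR0def]; field_simp
      exact div_self (ne_of_gt hr1)
    linarith
  obtain ⟨y₀, hy₀K, hy₀min⟩ :=
    (isCompact_closedBall (q i1) R0).exists_isMinOn
      ⟨q i1, by simp [Metric.mem_closedBall, hR0]⟩ hfcont.continuousOn
  have hy₀ : ∀ y, f y₀ ≤ f y := by
    intro y
    by_cases hy : y ∈ Metric.closedBall (q i1) R0
    · exact hy₀min hy
    · have h1 : f y₀ ≤ c0 := hy₀min (by simp [Metric.mem_closedBall, hR0])
      exact le_of_lt (lt_of_le_of_lt h1 (hkey y hy))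
  set lam : ℝ := f y₀ with hlamdef
  by_cases hlam1 : lam ≤ 1
  · refine ⟨y₀, fun i hi => ?_⟩
    have h1 := hfle y₀ i hi
    have h2 := hr i hi
    rw [div_le_iff₀ h2] at h1
    calc ‖y₀ - q i‖ ≤ lam * r i := h1
    _ ≤ 1 * r i := by nlinarith
    _ = r i := one_mul _
  push_neg at hlam1
  exfalso
  -- active set
  set Act : Finset ι := s.filter (fun i => lam ≤ ‖y₀ - q i‖ / r i) with hActdef
  have hActne : Act.Nonempty := by
    obtain ⟨i, hi, hie⟩ := Finset.exists_mem_eq_sup' hs (fun i => ‖y₀ - q i‖ / r i)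
    exact ⟨i, Finset.mem_filter.2 ⟨hi, le_of_eq hie⟩⟩
  have hActeq : ∀ i ∈ Act, ‖y₀ - q i‖ = lam * r i := by
    intro i hi
    obtain ⟨his, hle⟩ := Finset.mem_filter.1 hi
    have h2 := hfle y₀ i his
    have h3 := hr i his
    have h4 : ‖y₀ - q i‖ / r i = lam := le_antisymm h2 hle
    rw [div_eq_iff (ne_of_gt h3)] at h4
    rw [h4]
  set T : Finset E := Act.image q with hTdef
  by_cases hmem : y₀ ∈ convexHull ℝ (T : Set E)
  · -- y₀ is a convex combination of active points: algebraic contradiction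
    obtain ⟨μ, hμ0, hμ1, hμsum⟩ := Finset.mem_convexHull'.1 hmem
    have hwit : ∀ p : E, ∃ i : ι, p ∈ T → i ∈ Act ∧ q i = p := by
      intro p
      by_cases hp : p ∈ T
      · rw [hTdef, Finset.mem_image] at hp
        obtain ⟨i, hi, hqi⟩ := hp
        exact ⟨i, fun _ => ⟨hi, hqi⟩⟩
      · exact ⟨i1, fun h => absurd h hp⟩
    choose ind hind using hwit
    set sv : E → E := fun p => a (ind p) - w with hsvdef
    have hTact : ∀ p ∈ T, ind p ∈ Act ∧ q (ind p) = p := fun p hp => hind p hp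
    have hTs : ∀ p ∈ T, ind p ∈ s := fun p hp => (Finset.mem_filter.1 (hTact p hp).1).1
    have hsvnorm : ∀ p ∈ T, ‖sv p‖ = r (ind p) := by
      intro p _
      show ‖a (ind p) - w‖ = ‖w - a (ind p)‖
      rw [norm_sub_rev]
    have hsvpos : ∀ p ∈ T, 0 < ‖sv p‖ := by
      intro p hp
      rw [hsvnorm p hp]; exact hr _ (hTs p hp)
    have hnormp : ∀ p ∈ T, ‖p - y₀‖ = lam * ‖sv p‖ := by
      intro p hp
      have h1 := hActeq _ (hTact p hp).1
      rw [(hTact p hp).2] at h1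
      rw [norm_sub_rev, h1, hsvnorm p hp]
    have hpair : ∀ p ∈ T, ∀ p' ∈ T, ‖p - p'‖ ≤ ‖sv p - sv p'‖ := by
      intro p hp p' hp'
      have h1 := hlip (ind p) (hTs p hp) (ind p') (hTs p' hp')
      rw [(hTact p hp).2, (hTact p' hp').2] at h1
      have h2 : sv p - sv p' = a (ind p) - a (ind p') := by
        show (a (ind p) - w) - (a (ind p') - w) = _
        abel
      rw [h2]; exact h1
    have hterm : ∀ p ∈ T, ∀ p' ∈ T,
        (lam ^ 2 - 1) / 2 * (‖sv p‖ ^ 2 + ‖sv p'‖ ^ 2) + ⟪sv p, sv p'⟫ ≤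
          ⟪p - y₀, p' - y₀⟫ := by
      intro p hp p' hp'
      have h1 : ‖p - p'‖ ^ 2 ≤ ‖sv p - sv p'‖ ^ 2 := by
        have := hpair p hp p' hp'
        have h0 := norm_nonneg (p - p')
        nlinarith
      have e1 := norm_sub_sq_real (p - y₀) (p' - y₀)
      have e2 := norm_sub_sq_real (sv p) (sv p')
      have e3 : (p - y₀) - (p' - y₀) = p - p' := by abel
      rw [e3] at e1
      have e4 : ‖p - y₀‖ ^ 2 = lam ^ 2 * ‖sv p‖ ^ 2 := by rw [hnormp p hp]; ring
      have e5 : ‖p' - y₀‖ ^ 2 = lam ^ 2 * ‖sv p'‖ ^ 2 := by rw [hnormp p' hp']; ring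
      linarith
    -- summing up
    set A : ℝ := ∑ p ∈ T, μ p * ‖sv p‖ ^ 2 with hAdef
    set v : E := ∑ p ∈ T, μ p • sv p with hvdef
    set u : E := ∑ p ∈ T, μ p • (p - y₀) with hudef
    have hu : u = 0 := by
      rw [hudef]
      simp only [smul_sub, Finset.sum_sub_distrib]
      rw [hμsum, ← Finset.sum_smul, hμ1, one_smul, sub_self]
    have h2 : ∑ p ∈ T, ∑ p' ∈ T, (μ p * μ p') * ⟪p - y₀, p' - y₀⟫ = 0 := by
      rw [← inner_sum_sum T μ (fun p => p - y₀)]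
      rw [← hudef, hu, inner_zero_left]
    have hle : ∑ p ∈ T, ∑ p' ∈ T,
          (μ p * μ p') * ((lam ^ 2 - 1) / 2 * (‖sv p‖ ^ 2 + ‖sv p'‖ ^ 2) + ⟪sv p, sv p'⟫)
        ≤ ∑ p ∈ T, ∑ p' ∈ T, (μ p * μ p') * ⟪p - y₀, p' - y₀⟫ :=
      Finset.sum_le_sum fun p hp => Finset.sum_le_sum fun p' hp' =>
        mul_le_mul_of_nonneg_left (hterm p hp p' hp') (mul_nonneg (hμ0 p hp) (hμ0 p' hp'))
    have hsplit : ∑ p ∈ T, ∑ p' ∈ T,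
          (μ p * μ p') * ((lam ^ 2 - 1) / 2 * (‖sv p‖ ^ 2 + ‖sv p'‖ ^ 2) + ⟪sv p, sv p'⟫)
        = (lam ^ 2 - 1) * A + ⟪v, v⟫ := by
      have e1 : ∀ p ∈ T, ∑ p' ∈ T,
            (μ p * μ p') * ((lam ^ 2 - 1) / 2 * (‖sv p‖ ^ 2 + ‖sv p'‖ ^ 2) + ⟪sv p, sv p'⟫)
          = (lam ^ 2 - 1) / 2 * (μ p * ‖sv p‖ ^ 2)
            + ((lam ^ 2 - 1) / 2 * μ p) * A
            + ∑ p' ∈ T, (μ p * μ p') * ⟪sv p, sv p'⟫ := by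
        intro p _
        have estep : ∀ p' ∈ T,
            (μ p * μ p') * ((lam ^ 2 - 1) / 2 * (‖sv p‖ ^ 2 + ‖sv p'‖ ^ 2) + ⟪sv p, sv p'⟫)
            = μ p' * ((lam ^ 2 - 1) / 2 * (μ p * ‖sv p‖ ^ 2))
              + (((lam ^ 2 - 1) / 2 * μ p) * (μ p' * ‖sv p'‖ ^ 2)
              + (μ p * μ p') * ⟪sv p, sv p'⟫) := fun p' _ => by ring
        rw [Finset.sum_congr rfl estep, Finset.sum_add_distrib, ← Finset.sum_mul, hμ1, one_mul,
          Finset.sum_add_distrib, ← Finset.mul_sum, ← hAdef]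
        ring
      rw [Finset.sum_congr rfl e1, Finset.sum_add_distrib, Finset.sum_add_distrib]
      have hX : ∑ p ∈ T, (lam ^ 2 - 1) / 2 * (μ p * ‖sv p‖ ^ 2) = (lam ^ 2 - 1) / 2 * A := by
        rw [← Finset.mul_sum, ← hAdef]
      have hY : ∑ p ∈ T, ((lam ^ 2 - 1) / 2 * μ p) * A = (lam ^ 2 - 1) / 2 * A := by
        rw [← Finset.sum_mul, ← Finset.mul_sum, hμ1, mul_one]
      have hZ : ∑ p ∈ T, ∑ p' ∈ T, (μ p * μ p') * ⟪sv p, sv p'⟫ = ⟪v, v⟫ := by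
        rw [← inner_sum_sum T μ sv, ← hvdef]
      rw [hX, hY, hZ]
      ring
    have hApos : 0 < A := by
      obtain ⟨p0, hp0, hμp0⟩ : ∃ p ∈ T, 0 < μ p := by
        by_contra hcon
        push_neg at hcon
        have : (∑ p ∈ T, μ p) ≤ 0 := Finset.sum_nonpos hcon
        rw [hμ1] at this; linarith
      rw [hAdef]
      refine Finset.sum_pos' (fun p hp => mul_nonneg (hμ0 p hp) (sq_nonneg _)) ⟨p0, hp0, ?_⟩
      have := hsvpos p0 hp0
      positivity
    have hvv : 0 ≤ ⟪v, v⟫ := real_inner_self_nonneg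
    have hfin : (lam ^ 2 - 1) * A + ⟪v, v⟫ ≤ 0 := by
      rw [← hsplit]; rw [h2] at hle; exact hle
    have hprod : 0 < (lam ^ 2 - 1) * A := mul_pos (by nlinarith) hApos
    linarith
  · -- separation: y₀ is not a minimizer, contradiction
    have hclosed : IsClosed (convexHull ℝ (T : Set E)) := T.finite_toSet.isClosed_convexHull ℝ
    obtain ⟨φ, u0, hφy, hφT⟩ :=
      geometric_hahn_banach_point_closed (convex_convexHull ℝ _) hclosed hmem
    set v : E := (InnerProductSpace.toDual ℝ E).symm φ with hvdef
    have hv : ∀ z : E, ⟪v, z⟫ = φ z := fun z => InnerProductSpace.toDual_symm_apply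
    set δ : ℝ := u0 - φ y₀ with hδdef
    have hδ : 0 < δ := by rw [hδdef]; linarith
    have hvact : ∀ i ∈ Act, δ ≤ ⟪v, q i - y₀⟫ := by
      intro i hi
      have h1 : q i ∈ convexHull ℝ (T : Set E) := by
        refine subset_convexHull ℝ _ ?_
        rw [hTdef]
        exact_mod_cast Finset.mem_image_of_mem q hi
      have h2 := hφT _ h1
      rw [inner_sub_right, hv, hv]
      rw [hδdef]; linarith
    have hvne : v ≠ 0 := by
      intro hv0
      obtain ⟨i, hi⟩ := hActne
      have h1 := hvact i hi
      rw [hv0] at h1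
      simp at h1
      linarith
    have hvnorm : 0 < ‖v‖ := norm_pos_iff.2 hvne
    have hstep : ∀ i : ι, ∃ ε : ℝ, 0 < ε ∧
        (i ∈ s → ∀ t : ℝ, 0 < t → t ≤ ε → ‖(y₀ + t • v) - q i‖ / r i < lam) := by
      intro i
      by_cases hiact : i ∈ Act
      · refine ⟨δ / ‖v‖ ^ 2, by positivity, fun his t ht0 htε => ?_⟩
        have hri := hr i his
        have hact := hActeq i hiact
        have hIP := hvact i hiact
        have hexp : ‖(y₀ + t • v) - q i‖ ^ 2
            = ‖y₀ - q i‖ ^ 2 + 2 * (t * ⟪y₀ - q i, v⟫) + t ^ 2 * ‖v‖ ^ 2 := by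
          have e0 : (y₀ + t • v) - q i = (y₀ - q i) + t • v := by abel
          rw [e0, norm_add_sq_real, real_inner_smul_right, norm_smul, Real.norm_eq_abs,
            abs_of_pos ht0]
          ring
        have hip2 : ⟪y₀ - q i, v⟫ ≤ -δ := by
          have e : ⟪v, q i - y₀⟫ = -⟪y₀ - q i, v⟫ := by
            rw [real_inner_comm, ← neg_sub y₀ (q i), inner_neg_left]
          linarith [e ▸ hIP]
        have h1 : t * ‖v‖ ^ 2 ≤ δ := by
          calc t * ‖v‖ ^ 2 ≤ (δ / ‖v‖ ^ 2) * ‖v‖ ^ 2 := by gcongr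
          _ = δ := by field_simp
        have hlt : ‖(y₀ + t • v) - q i‖ ^ 2 < ‖y₀ - q i‖ ^ 2 := by nlinarith
        have hlt2 : ‖(y₀ + t • v) - q i‖ < ‖y₀ - q i‖ := by
          nlinarith [norm_nonneg ((y₀ + t • v) - q i), norm_nonneg (y₀ - q i)]
        rw [div_lt_iff₀ hri]
        calc ‖(y₀ + t • v) - q i‖ < ‖y₀ - q i‖ := hlt2
        _ = lam * r i := hact
      · by_cases his : i ∈ s
        · have hgap : ‖y₀ - q i‖ < lam * r i := by
            have h1 : ¬ (lam ≤ ‖y₀ - q i‖ / r i) := by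
              intro hcon
              exact hiact (Finset.mem_filter.2 ⟨his, hcon⟩)
            push_neg at h1
            rw [div_lt_iff₀ (hr i his)] at h1
            exact h1
          refine ⟨(lam * r i - ‖y₀ - q i‖) / (‖v‖ + 1), div_pos (by linarith) (by positivity), fun _ t ht0 htε => ?_⟩
          have hri := hr i his
          rw [div_lt_iff₀ hri]
          have h2 : ‖(y₀ + t • v) - q i‖ ≤ ‖y₀ - q i‖ + t * ‖v‖ := by
            have e0 : (y₀ + t • v) - q i = (y₀ - q i) + t • v := by abel
            rw [e0]
            calc ‖(y₀ - q i) + t • v‖ ≤ ‖y₀ - q i‖ + ‖t • v‖ := norm_add_le _ _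
            _ = ‖y₀ - q i‖ + t * ‖v‖ := by
                rw [norm_smul, Real.norm_eq_abs, abs_of_pos ht0]
          have h3 : t * ‖v‖ < lam * r i - ‖y₀ - q i‖ := by
            calc t * ‖v‖ ≤ ((lam * r i - ‖y₀ - q i‖) / (‖v‖ + 1)) * ‖v‖ :=
                  mul_le_mul_of_nonneg_right htε (norm_nonneg v)
            _ < lam * r i - ‖y₀ - q i‖ := by
                rw [div_mul_eq_mul_div, div_lt_iff₀ (by positivity)]
                have hnv := norm_nonneg v
                nlinarith
          linarith
        · exact ⟨1, one_pos, fun h => absurd h his⟩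
    choose ε hε0 hεlt using hstep
    set t0 : ℝ := s.inf' hs ε with ht0def
    have ht0pos : 0 < t0 := by
      obtain ⟨i, hi, hie⟩ := Finset.exists_mem_eq_inf' hs ε
      rw [ht0def, hie]; exact hε0 i
    have hft0 : f (y₀ + t0 • v) < lam := by
      have hall : ∀ i ∈ s, ‖(y₀ + t0 • v) - q i‖ / r i < lam := fun i hi =>
        hεlt i hi t0 ht0pos (Finset.inf'_le ε hi)
      exact (Finset.sup'_lt_iff hs).2 hall
    have hlast := hy₀ (y₀ + t0 • v)
    linarith

omit [InnerProductSpace ℝ E] in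
lemma norm_le_of_sq_le_sq' {u v : E} (h : ‖u‖ ^ 2 ≤ ‖v‖ ^ 2) : ‖u‖ ≤ ‖v‖ := by
  nlinarith [norm_nonneg u, norm_nonneg v]

lemma ball_form (w x u z : E) :
    0 ≤ ⟪z - x, (w - z) - u⟫ ↔
      z ∈ Metric.closedBall ((2:ℝ)⁻¹ • (x + w - u)) (‖w - (x + u)‖ / 2) := by
  set c : E := (2:ℝ)⁻¹ • (x + w - u) with hc
  set e : E := (2:ℝ)⁻¹ • (w - x - u) with he
  have h1 : z - x = (z - c) + e := by rw [hc, he]; module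
  have h2 : (w - z) - u = e - (z - c) := by rw [hc, he]; module
  have expand : ∀ d e' : E, ⟪d + e', e' - d⟫ = ‖e'‖ ^ 2 - ‖d‖ ^ 2 := by
    intro d e'
    rw [inner_add_left, inner_sub_right d e' d, inner_sub_right e' e' d,
      real_inner_self_eq_norm_sq, real_inner_self_eq_norm_sq, real_inner_comm e' d]
    ring
  have h3 : ⟪z - x, (w - z) - u⟫ = ‖e‖ ^ 2 - ‖z - c‖ ^ 2 := by
    rw [h1, h2, expand (z - c) e]
  have h4 : ‖e‖ = ‖w - (x + u)‖ / 2 := by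
    rw [he, norm_smul, sub_sub, Real.norm_eq_abs, abs_of_pos (by norm_num : (0:ℝ) < 2⁻¹)]
    ring
  rw [Metric.mem_closedBall, dist_eq_norm, ← h4, h3]
  constructor
  · intro h; apply norm_le_of_sq_le_sq'; linarith
  · intro h
    have h5 := pow_le_pow_left₀ (norm_nonneg (z - c)) h 2
    linarith

lemma minty [FiniteDimensional ℝ E] (A : E → Set E)
    (hmono : ∀ x y u v : E, u ∈ A x → v ∈ A y → 0 ≤ ⟪x - y, u - v⟫)
    (hmax : ∀ x u : E, (∀ y v : E, v ∈ A y → 0 ≤ ⟪x - y, u - v⟫) → u ∈ A x)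
    (w : E) : ∃ z, w - z ∈ A z := by
  classical
  have hkey : ∃ z : E, ∀ m : E × E, m.2 ∈ A m.1 → 0 ≤ ⟪z - m.1, (w - z) - m.2⟫ := by
    by_cases hne : ∃ m : E × E, m.2 ∈ A m.1
    · obtain ⟨m₀, hm₀⟩ := hne
      set S : E × E → Set E := fun m =>
        Metric.closedBall ((2:ℝ)⁻¹ • (m.1 + w - m.2)) (‖w - (m.1 + m.2)‖ / 2) with hSdef
      have hfin : ∀ F : Finset (E × E), (∀ m ∈ F, m.2 ∈ A m.1) → ∃ z, ∀ m ∈ F, z ∈ S m := by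
        intro F hF
        have hlip : ∀ m ∈ F, ∀ m' ∈ F,
            ‖(m.1 - m.2) - (m'.1 - m'.2)‖ ≤ ‖(m.1 + m.2) - (m'.1 + m'.2)‖ := by
          intro m hm m' hm'
          have hip := hmono m.1 m'.1 m.2 m'.2 (hF m hm) (hF m' hm')
          have e1 := norm_sub_sq_real (m.1 - m'.1) (m.2 - m'.2)
          have e2 := norm_add_sq_real (m.1 - m'.1) (m.2 - m'.2)
          have e3 : (m.1 - m.2) - (m'.1 - m'.2) = (m.1 - m'.1) - (m.2 - m'.2) := by abel
          have e4 : (m.1 + m.2) - (m'.1 + m'.2) = (m.1 - m'.1) + (m.2 - m'.2) := by abel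
          rw [e3, e4]
          apply norm_le_of_sq_le_sq'
          linarith
        obtain ⟨y, hy⟩ :=
          finite_kirszbraun F (fun m => m.1 + m.2) (fun m => m.1 - m.2) w hlip
        refine ⟨(2:ℝ)⁻¹ • (w + y), fun m hm => ?_⟩
        have hzc : (2:ℝ)⁻¹ • (w + y) - (2:ℝ)⁻¹ • (m.1 + w - m.2)
            = (2:ℝ)⁻¹ • (y - (m.1 - m.2)) := by module
        rw [hSdef]
        rw [Metric.mem_closedBall, dist_eq_norm, hzc, norm_smul, Real.norm_eq_abs,
          abs_of_pos (by norm_num : (0:ℝ) < 2⁻¹)]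
        have := hy m hm
        linarith
      by_contra hcon
      push_neg at hcon
      have hempty : S m₀ ∩ ⋂ (i : {m : E × E // m.2 ∈ A m.1}), S i.1 = ∅ := by
        ext z
        simp only [Set.mem_inter_iff, Set.mem_iInter, Set.mem_empty_iff_false, iff_false,
          not_and]
        intro _ hzall
        obtain ⟨m, hmA, hmlt⟩ := hcon z
        exact (not_le.2 hmlt) ((ball_form w m.1 m.2 z).2 (hzall ⟨m, hmA⟩))
      obtain ⟨u, hu⟩ :=
        (isCompact_closedBall _ _).elim_finite_subfamily_closed
          (fun i : {m : E × E // m.2 ∈ A m.1} => S i.1)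
          (fun i => Metric.isClosed_closedBall) hempty
      obtain ⟨z, hz⟩ := hfin (insert m₀ (u.image Subtype.val)) (by
        intro m hm
        rcases Finset.mem_insert.1 hm with rfl | hm'
        · exact hm₀
        · obtain ⟨i, _, rfl⟩ := Finset.mem_image.1 hm'
          exact i.2)
      rw [Set.eq_empty_iff_forall_notMem] at hu
      refine absurd ?_ (hu z)
      refine ⟨hz m₀ (Finset.mem_insert_self _ _), ?_⟩
      refine Set.mem_iInter₂.2 fun i hi => ?_
      exact hz i.1 (Finset.mem_insert_of_mem (Finset.mem_image_of_mem _ hi))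
    · push_neg at hne
      exact ⟨w, fun m hm => absurd hm (hne m)⟩
  obtain ⟨z, hz⟩ := hkey
  exact ⟨z, hmax z (w - z) (fun y v hv => hz (y, v) hv)⟩

end Minty

set_option maxHeartbeats 1000000 in
/-- the operator T = (Id + P⁻¹(D+N))⁻¹ ∘ (Id − P⁻¹H₀) is single-valued
and κ/(2κ−1)-averaged nonexpansive in the P-inner product. -/
theorem stmt_16 {H : Type*} [NormedAddCommGroup H] [InnerProductSpace ℝ H]
    [FiniteDimensional ℝ H]
    (P Pinv N : H →ₗ[ℝ] H) (H0 : H → H) (D : H → Set H) (κ : ℝ) (hκ : 1 < κ)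
    (hPsa : ∀ x y : H, ⟪P x, y⟫ = ⟪x, P y⟫)
    (hPpd : ∀ x : H, x ≠ 0 → 0 < ⟪x, P x⟫)
    (hPinv : ∀ x : H, P (Pinv x) = x ∧ Pinv (P x) = x)
    (hDmono : ∀ x y u v : H, u ∈ D x → v ∈ D y → 0 ≤ ⟪x - y, u - v⟫)
    (hDmax : ∀ x u : H, (∀ y v : H, v ∈ D y → 0 ≤ ⟪x - y, u - v⟫) → u ∈ D x)
    (hNskew : ∀ x y : H, ⟪N x, y⟫ = -⟪x, N y⟫)
    (hH0affine : ∃ (A : H →ₗ[ℝ] H) (b : H), ∀ x, H0 x = A x + b)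
    (hnonexp : ∀ x y : H,
      ⟪(x - y) - κ • (Pinv (H0 x) - Pinv (H0 y)),
        P ((x - y) - κ • (Pinv (H0 x) - Pinv (H0 y)))⟫ ≤ ⟪x - y, P (x - y)⟫) :
    ∃ T : H → H,
      (∀ x z : H, T x = z ↔ P x - H0 x - P z - N z ∈ D z) ∧
      ∃ R : H → H,
        (∀ x y : H, ⟪R x - R y, P (R x - R y)⟫ ≤ ⟪x - y, P (x - y)⟫) ∧
        ∀ x : H, T x = (1 - κ / (2 * κ - 1)) • x + (κ / (2 * κ - 1)) • R x := by
  classical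
  have h2κ : (0:ℝ) < 2 * κ - 1 := by linarith
  have hκ0 : (0:ℝ) < κ := by linarith
  have hBsymm : ∀ x y : H, ⟪x, P y⟫ = ⟪y, P x⟫ := fun x y => by
    rw [← hPsa x y, real_inner_comm]
  have hBnonneg : ∀ x : H, 0 ≤ ⟪x, P x⟫ := fun x => by
    rcases eq_or_ne x 0 with rfl | hx
    · simp
    · exact (hPpd x hx).le
  have hNzero : ∀ c : H, ⟪c, N c⟫ = 0 := fun c => by
    have h1 := hNskew c c
    have h2 := real_inner_comm (N c) c
    linarith
  -- the operator A = P⁻¹ ∘ (D + N)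
  set A : H → Set H := fun z => {a : H | P a - N z ∈ D z} with hAdef
  have hAmono : ∀ z y a b : H, a ∈ A z → b ∈ A y → 0 ≤ ⟪z - y, P (a - b)⟫ := by
    intro z y a b ha hb
    have hm := hDmono z y _ _ ha hb
    have e : P (a - b) = ((P a - N z) - (P b - N y)) + (N (z - y)) := by
      rw [map_sub, map_sub]; abel
    rw [e, inner_add_right, hNzero (z - y), add_zero]
    exact hm
  have hAmax : ∀ z a : H, (∀ y b : H, b ∈ A y → 0 ≤ ⟪z - y, P (a - b)⟫) → a ∈ A z := by
    intro z a hyp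
    show P a - N z ∈ D z
    apply hDmax
    intro y v hv
    set b : H := Pinv (v + N y) with hbdef
    have hPb : P b = v + N y := (hPinv (v + N y)).1
    have hb : b ∈ A y := by
      show P b - N y ∈ D y
      rw [hPb, add_sub_cancel_right]
      exact hv
    have h1 := hyp y b hb
    rw [map_sub] at h1
    have e : (P a - N z) - v = (P a - P b) + (N y - N z) := by
      rw [hPb]; abel
    have h2 : ⟪z - y, N y - N z⟫ = 0 := by
      have e2 : N y - N z = -(N (z - y)) := by rw [map_sub]; abel
      rw [e2, inner_neg_right, hNzero (z - y), neg_zero]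
    rw [e, inner_add_right, h2, add_zero]
    exact h1
  -- existence of the resolvent via Minty in the P-inner product
  have hexist : ∀ x : H, ∃ z : H, P x - H0 x - P z - N z ∈ D z := by
    intro x
    have fdstd : FiniteDimensional ℝ H := inferInstance
    let stdag : AddCommGroup H := inferInstance
    let stdmod : Module ℝ H := inferInstance
    let core : InnerProductSpace.Core ℝ H :=
      { inner := fun a b => ⟪a, P b⟫
        conj_inner_symm := fun a b => by
          simp only [starRingEnd_apply, star_trivial]
          exact hBsymm b a
        re_inner_nonneg := fun a => hBnonneg a
        definite := fun a ha => by
          by_contra h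
          exact (hPpd a h).ne' ha
        add_left := fun a b c => inner_add_left a b (P c)
        smul_left := fun a b r => by
          simp only [starRingEnd_apply, star_trivial]
          exact real_inner_smul_left a (P b) r }
    let ips2 := @InnerProductSpace.ofCore ℝ H _ stdag stdmod core.toCore
    let nacg2 : NormedAddCommGroup H := @InnerProductSpace.Core.toNormedAddCommGroup ℝ H _ stdag stdmod core
    obtain ⟨z, hz⟩ := @minty H nacg2 ips2 fdstd A hAmono hAmax (x - Pinv (H0 x))
    refine ⟨z, ?_⟩
    have hz2 : P ((x - Pinv (H0 x)) - z) - N z ∈ D z := hz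
    have e : P ((x - Pinv (H0 x)) - z) - N z = P x - H0 x - P z - N z := by
      rw [map_sub, map_sub, (hPinv (H0 x)).1]
    rw [e] at hz2
    exact hz2
  -- uniqueness of the resolvent
  have huniq : ∀ x z₁ z₂ : H, P x - H0 x - P z₁ - N z₁ ∈ D z₁ →
      P x - H0 x - P z₂ - N z₂ ∈ D z₂ → z₁ = z₂ := by
    intro x z₁ z₂ h1 h2
    have hm := hDmono z₁ z₂ _ _ h1 h2
    have e : (P x - H0 x - P z₁ - N z₁) - (P x - H0 x - P z₂ - N z₂)
        = -(P (z₁ - z₂)) - N (z₁ - z₂) := by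
      rw [map_sub, map_sub]; abel
    rw [e, inner_sub_right, inner_neg_right, hNzero (z₁ - z₂), sub_zero] at hm
    by_contra hne
    have hd : z₁ - z₂ ≠ 0 := sub_ne_zero.2 hne
    have := hPpd _ hd
    linarith
  choose T hT using hexist
  have hiff : ∀ x z : H, T x = z ↔ P x - H0 x - P z - N z ∈ D z := by
    intro x z
    constructor
    · rintro rfl; exact hT x
    · intro h; exact huniq x (T x) z (hT x) h
  refine ⟨T, hiff, ?_⟩
  set β : ℝ := (2 * κ - 1) / κ with hβ
  have hβpos : 0 < β := div_pos h2κ hκ0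
  refine ⟨fun x => (1 - β) • x + β • T x, ?_, ?_⟩
  · -- nonexpansiveness of R in the P-inner product
    intro x y
    show ⟪((1 - β) • x + β • T x) - ((1 - β) • y + β • T y),
        P (((1 - β) • x + β • T x) - ((1 - β) • y + β • T y))⟫ ≤ ⟪x - y, P (x - y)⟫
    set d : H := x - y with hd
    set z : H := T x - T y with hz
    set q : H := Pinv (H0 x) - Pinv (H0 y) with hq
    have hRxy : ((1 - β) • x + β • T x) - ((1 - β) • y + β • T y) = (1 - β) • d + β • z := by
      rw [hd, hz]; module
    rw [hRxy]
    -- F1 : firm nonexpansiveness of the resolvent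
    have hF1 : 0 ≤ ⟪d, P z⟫ - ⟪z, P q⟫ - ⟪z, P z⟫ := by
      have hm0 : (0:ℝ) ≤ ⟪z, (P x - H0 x - P (T x) - N (T x)) - (P y - H0 y - P (T y) - N (T y))⟫ := by
        rw [hz]; exact hDmono (T x) (T y) _ _ (hT x) (hT y)
      have ePq : P q = H0 x - H0 y := by
        rw [hq, map_sub, (hPinv (H0 x)).1, (hPinv (H0 y)).1]
      have e : (P x - H0 x - P (T x) - N (T x)) - (P y - H0 y - P (T y) - N (T y))
          = P d - P q - P z - N z := by
        rw [hd, hz, ePq, map_sub, map_sub, map_sub]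
        abel
      rw [e, inner_sub_right, inner_sub_right, inner_sub_right, hNzero z, sub_zero,
        hBsymm z d] at hm0
      linarith
    -- F2 : the given averagedness of Id - P⁻¹ H0
    have hF2 : ⟪d, P d⟫ - 2*κ*⟪d, P q⟫ + κ^2*⟪q, P q⟫ ≤ ⟪d, P d⟫ := by
      have h2 := hnonexp x y
      rw [← hd, ← hq] at h2
      have e6 : ⟪d - κ • q, P (d - κ • q)⟫
          = ⟪d, P d⟫ - 2*κ*⟪d, P q⟫ + κ^2*⟪q, P q⟫ := by
        simp only [map_sub, map_smul, inner_sub_left, inner_sub_right,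
          real_inner_smul_left, real_inner_smul_right]
        rw [hBsymm q d]
        ring
      rw [e6] at h2
      exact h2
    -- F3 : positivity of the P-form on d - z - κ q
    have hF3 : 0 ≤ ⟪d, P d⟫ - 2*⟪d, P z⟫ + ⟪z, P z⟫ - 2*κ*⟪d, P q⟫ + 2*κ*⟪z, P q⟫
        + κ^2*⟪q, P q⟫ := by
      have h3 := hBnonneg (d - z - κ • q)
      have e5 : ⟪d - z - κ • q, P (d - z - κ • q)⟫
          = ⟪d, P d⟫ - 2*⟪d, P z⟫ + ⟪z, P z⟫ - 2*κ*⟪d, P q⟫ + 2*κ*⟪z, P q⟫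
            + κ^2*⟪q, P q⟫ := by
        simp only [map_sub, map_smul, inner_sub_left, inner_sub_right,
          real_inner_smul_left, real_inner_smul_right]
        rw [hBsymm z d, hBsymm q d, hBsymm q z]
        ring
      rw [e5] at h3
      exact h3
    -- expand the goal
    have egoal : ⟪(1 - β) • d + β • z, P ((1 - β) • d + β • z)⟫
        = (1-β)^2*⟪d, P d⟫ + 2*((1-β)*β)*⟪d, P z⟫ + β^2*⟪z, P z⟫ := by
      simp only [map_add, map_smul, inner_add_left, inner_add_right,
        real_inner_smul_left, real_inner_smul_right]
      rw [hBsymm z d]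
      ring
    rw [egoal]
    -- certificate
    have ha1 : 0 ≤ ⟪d, P z⟫ - ⟪z, P q⟫ - ⟪z, P z⟫ := hF1
    have ha2 : 0 ≤ 2*κ*⟪d, P q⟫ - κ^2*⟪q, P q⟫ := by linarith
    have ha3 : 0 ≤ ⟪d, P d⟫ - 2*⟪d, P z⟫ + ⟪z, P z⟫ - 2*κ*⟪d, P q⟫ + 2*κ*⟪z, P q⟫
        + κ^2*⟪q, P q⟫ := hF3
    have hcert : ⟪d, P d⟫ - ((1-β)^2*⟪d, P d⟫ + 2*((1-β)*β)*⟪d, P z⟫ + β^2*⟪z, P z⟫)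
        = β * (2*(⟪d, P z⟫ - ⟪z, P q⟫ - ⟪z, P z⟫)
            + (2*κ*⟪d, P q⟫ - κ^2*⟪q, P q⟫)/κ
            + (⟪d, P d⟫ - 2*⟪d, P z⟫ + ⟪z, P z⟫ - 2*κ*⟪d, P q⟫ + 2*κ*⟪z, P q⟫
              + κ^2*⟪q, P q⟫)/κ) := by
      rw [hβ]
      field_simp
      ring
    have hrhs : 0 ≤ β * (2*(⟪d, P z⟫ - ⟪z, P q⟫ - ⟪z, P z⟫)
            + (2*κ*⟪d, P q⟫ - κ^2*⟪q, P q⟫)/κ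
            + (⟪d, P d⟫ - 2*⟪d, P z⟫ + ⟪z, P z⟫ - 2*κ*⟪d, P q⟫ + 2*κ*⟪z, P q⟫
              + κ^2*⟪q, P q⟫)/κ) := by
      apply mul_nonneg hβpos.le
      have t1 : 0 ≤ 2*(⟪d, P z⟫ - ⟪z, P q⟫ - ⟪z, P z⟫) := by linarith
      have t2 : 0 ≤ (2*κ*⟪d, P q⟫ - κ^2*⟪q, P q⟫)/κ := div_nonneg ha2 hκ0.le
      have t3 : 0 ≤ (⟪d, P d⟫ - 2*⟪d, P z⟫ + ⟪z, P z⟫ - 2*κ*⟪d, P q⟫ + 2*κ*⟪z, P q⟫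
              + κ^2*⟪q, P q⟫)/κ := div_nonneg ha3 hκ0.le
      linarith
    linarith
  · -- the averagedness identity
    intro x
    show T x = (1 - κ / (2 * κ - 1)) • x + (κ / (2 * κ - 1)) • ((1 - β) • x + β • T x)
    have hα : κ/(2*κ-1) * β = 1 := by
      rw [hβ]; field_simp
      exact div_self (ne_of_gt (by linarith))
    have hc : (1 - κ/(2*κ-1)) + κ/(2*κ-1)*(1-β) = 0 := by
      rw [mul_one_sub, hα]; ring
    have e : (1 - κ / (2 * κ - 1)) • x + (κ / (2 * κ - 1)) • ((1 - β) • x + β • T x)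
        = ((1 - κ/(2*κ-1)) + κ/(2*κ-1)*(1-β)) • x + (κ/(2*κ-1) * β) • T x := by
      module
    rw [e, hc, hα, zero_smul, one_smul, zero_add]
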